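/- Let f : G ⟶ H be a morphism of simplicial groups (simplicial objects in the category of groups) such that f_n : G_n → H_n is surjective for every n. Then the underlying morphism of simplicial sets is a Kan fibration, i.e. it has the right lifting property with respect to every horn inclusion Λ[n,k] ⟶ Δ[n] for n ≥ 1 and 0 ≤ k ≤ n. -/

import Mathlib

open CategoryTheory Simplicial SSet Opposite

universe u

/-- The functor sending a simplicial group to its underlying simplicial set. -/
def simplicialGroupToSSet :
    CategoryTheory.SimplicialObject GrpCat.{u} ⥤ SSet.{u} :=
  (CategoryTheory.SimplicialObject.whiskering _ _).obj (forget GrpCat)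

namespace MooreAux

open SimplexCategory

variable {G H : CategoryTheory.SimplicialObject GrpCat.{u}}

/-- Elementwise first simplicial identity. -/
lemma δδ (X : CategoryTheory.SimplicialObject GrpCat.{u}) {n} {i j : Fin (n + 2)} (hij : i ≤ j)
    (a : X _⦋n + 2⦌) : X.δ i (X.δ j.succ a) = X.δ j (X.δ i.castSucc a) := by
  have := ConcreteCategory.congr_hom (X.δ_comp_δ hij) a
  simpa using this

lemma δσ_le (X : CategoryTheory.SimplicialObject GrpCat.{u}) {n} {i : Fin (n + 2)} {j : Fin (n + 1)}
    (hij : i ≤ j.castSucc) (a : X _⦋n + 1⦌) :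
    X.δ i.castSucc (X.σ j.succ a) = X.σ j (X.δ i a) := by
  have := ConcreteCategory.congr_hom (X.δ_comp_σ_of_le hij) a
  simpa using this

lemma δσ_self (X : CategoryTheory.SimplicialObject GrpCat.{u}) {n} (i : Fin (n + 1))
    (a : X _⦋n⦌) : X.δ i.castSucc (X.σ i a) = a := by
  have := ConcreteCategory.congr_hom (X.δ_comp_σ_self (i := i)) a
  simpa using this

lemma δσ_succ (X : CategoryTheory.SimplicialObject GrpCat.{u}) {n} (i : Fin (n + 1))
    (a : X _⦋n⦌) : X.δ i.succ (X.σ i a) = a := by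
  have := ConcreteCategory.congr_hom (X.δ_comp_σ_succ (i := i)) a
  simpa using this

lemma δσ_gt (X : CategoryTheory.SimplicialObject GrpCat.{u}) {n} {i : Fin (n + 2)} {j : Fin (n + 1)}
    (hij : j.castSucc < i) (a : X _⦋n + 1⦌) :
    X.δ i.succ (X.σ j.castSucc a) = X.σ j (X.δ i a) := by
  have := ConcreteCategory.congr_hom (X.δ_comp_σ_of_gt hij) a
  simpa using this

lemma napp_δ (f : G ⟶ H) {n} (i : Fin (n + 2)) (a : G _⦋n + 1⦌) :
    f.app _ (G.δ i a) = H.δ i (f.app _ a) := by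
  have := ConcreteCategory.congr_hom (f.naturality (SimplexCategory.δ i).op) a
  simp only [comp_apply] at this
  exact this

lemma napp_σ (f : G ⟶ H) {n} (i : Fin (n + 1)) (a : G _⦋n⦌) :
    f.app _ (G.σ i a) = H.σ i (f.app _ a) := by
  have := ConcreteCategory.congr_hom (f.naturality (SimplexCategory.σ i).op) a
  simp only [comp_apply] at this
  exact this

/-- Applying a morphism from a standard simplex to a simplex of the source. -/
lemma app_symm (X : SSet.{u}) {n' m : SimplexCategory} (v : stdSimplex.obj n' ⟶ X)
    (φ : m ⟶ n') :
    v.app (op m) ((stdSimplex.objEquiv (n := n') (m := op m)).symm φ) =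
      X.map φ.op (SSet.yonedaEquiv (X := X) (n := n') v) := by
  have h := types_congr_hom (v.naturality φ.op) ((stdSimplex.objEquiv (n := n') (m := op n')).symm (𝟙 n'))
  simp only [types_comp_apply] at h
  have h2 : (stdSimplex.obj n').map φ.op ((stdSimplex.objEquiv (n := n') (m := op n')).symm (𝟙 n'))
      = (stdSimplex.objEquiv (n := n') (m := op m)).symm φ := by
    rw [stdSimplex.map_apply]
    simp
  rw [h2] at h
  exact h

/-- Filling a horn `Λ[1, k]` relative to a surjection. -/
lemma fill_zero (f : G ⟶ H) (hsurj : ∀ s, Function.Surjective (f.app s)) (k : Fin 2)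
    (x : Fin 2 → G _⦋0⦌) (y : H _⦋1⦌)
    (hy : ∀ j, j ≠ k → H.δ j y = f.app _ (x j)) :
    ∃ g : G _⦋1⦌, f.app _ g = y ∧ ∀ j, j ≠ k → G.δ j g = x j := by
  obtain ⟨y', hy'⟩ := hsurj _ y
  fin_cases k
  · refine ⟨y' * G.σ 0 ((G.δ 1 y')⁻¹ * x 1), ?_, ?_⟩
    · rw [map_mul, hy', napp_σ, map_mul, map_inv, napp_δ, hy', ← hy 1 (by decide),
        inv_mul_cancel, map_one, mul_one]
    · intro j hj
      fin_cases j
      · simp at hj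
      · show G.δ 1 _ = x 1
        rw [map_mul, show (1 : Fin 2) = (0 : Fin 1).succ from rfl, δσ_succ,
          mul_inv_cancel_left]
  · refine ⟨y' * G.σ 0 ((G.δ 0 y')⁻¹ * x 0), ?_, ?_⟩
    · rw [map_mul, hy', napp_σ, map_mul, map_inv, napp_δ, hy', ← hy 0 (by decide),
        inv_mul_cancel, map_one, mul_one]
    · intro j hj
      fin_cases j
      · show G.δ 0 _ = x 0
        rw [map_mul, show (0 : Fin 2) = (0 : Fin 1).castSucc from rfl, δσ_self,
          mul_inv_cancel_left]
      · simp at hj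

set_option maxHeartbeats 1000000 in
/-- Filling a horn `Λ[m+2, k]` relative to a surjection (Moore's algorithm). -/
lemma fill_succ (f : G ⟶ H) (hsurj : ∀ s, Function.Surjective (f.app s)) (m : ℕ)
    (k : Fin (m + 3)) (x : Fin (m + 3) → G _⦋m + 1⦌)
    (compat : ∀ (i j : Fin (m + 2)), i ≤ j → i.castSucc ≠ k → j.succ ≠ k →
      G.δ i (x j.succ) = G.δ j (x i.castSucc))
    (y : H _⦋m + 2⦌)
    (hy : ∀ j, j ≠ k → H.δ j y = f.app _ (x j)) :
    ∃ g : G _⦋m + 2⦌, f.app _ g = y ∧ ∀ j, j ≠ k → G.δ j g = x j := by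
  -- multiplying by a correction does not change the image under `f`
  have fstep : ∀ (t : Fin (m + 2)) (u : G _⦋m + 2⦌) (j : Fin (m + 3)), j ≠ k →
      f.app _ u = y → f.app _ (u * G.σ t ((G.δ j u)⁻¹ * x j)) = y := by
    intro t u j hj hu
    rw [map_mul, hu, napp_σ, map_mul, map_inv, napp_δ, hu, ← hy j hj,
      inv_mul_cancel, map_one, mul_one]
  have hk3 : (k : ℕ) < m + 3 := k.isLt
  -- Phase 1 : fill the faces below `k`
  have P : ∀ r : ℕ, r ≤ (k : ℕ) → ∃ u : G _⦋m + 2⦌, f.app _ u = y ∧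
      ∀ i : Fin (m + 3), i ≠ k → (i : ℕ) < r → G.δ i u = x i := by
    intro r
    induction r with
    | zero =>
      intro _
      obtain ⟨y', hy'⟩ := hsurj _ y
      exact ⟨y', hy', fun i _ h => absurd h (by omega)⟩
    | succ r ih =>
      intro hrk
      obtain ⟨u, hu, hface⟩ := ih (by omega)
      obtain ⟨t, htv⟩ : ∃ t : Fin (m + 2), (t : ℕ) = r := ⟨⟨r, by omega⟩, rfl⟩
      have htk : t.castSucc ≠ k := by
        simp only [ne_eq, Fin.ext_iff, Fin.coe_castSucc]; omega
      refine ⟨u * G.σ t ((G.δ t.castSucc u)⁻¹ * x t.castSucc), fstep t u t.castSucc htk hu, ?_⟩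
      intro i hik hir
      rcases Nat.lt_or_ge (i : ℕ) r with hlt | hge
      · -- previously filled face
        obtain ⟨i₂, rfl⟩ : ∃ i₂ : Fin (m + 2), i = i₂.castSucc :=
          ⟨⟨(i : ℕ), by omega⟩, by apply Fin.ext; simp⟩
        simp only [Fin.coe_castSucc] at hlt hir
        obtain ⟨jj, hjjv⟩ : ∃ jj : Fin (m + 1), (jj : ℕ) = r - 1 := ⟨⟨r - 1, by omega⟩, rfl⟩
        have ht_eq : t = jj.succ := by apply Fin.ext; simp only [Fin.val_succ]; omega
        rw [ht_eq]
        have hle : i₂ ≤ jj.castSucc := by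
          rw [Fin.le_def]; simp only [Fin.coe_castSucc]; omega
        have hjk2 : (jj.castSucc).succ ≠ k := by
          simp only [ne_eq, Fin.ext_iff, Fin.val_succ, Fin.coe_castSucc]; omega
        rw [← Fin.succ_castSucc, map_mul, δσ_le G hle, map_mul, map_inv,
          δδ G hle u, compat i₂ jj.castSucc hle hik hjk2,
          hface i₂.castSucc hik (by simpa using hlt), inv_mul_cancel, map_one, mul_one]
      · -- the new face
        have hieq : i = t.castSucc := by
          apply Fin.ext; simp only [Fin.coe_castSucc]; omega
        rw [hieq, map_mul, δσ_self, mul_inv_cancel_left]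
  -- Phase 2 : fill the faces above `k`, from the top down
  have Q : ∀ d : ℕ, d ≤ m + 2 - (k : ℕ) → ∃ u : G _⦋m + 2⦌, f.app _ u = y ∧
      ∀ i : Fin (m + 3), i ≠ k → ((i : ℕ) < (k : ℕ) ∨ m + 3 - d ≤ (i : ℕ)) → G.δ i u = x i := by
    intro d
    induction d with
    | zero =>
      intro _
      obtain ⟨u, hu, hface⟩ := P k le_rfl
      refine ⟨u, hu, fun i hik h => hface i hik ?_⟩
      rcases h with h | h
      · exact h
      · have := i.isLt; omega
    | succ d ih =>
      intro hd
      obtain ⟨u, hu, hface⟩ := ih (by omega)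
      have hrk : (k : ℕ) < m + 2 - d := by omega
      obtain ⟨t, htv⟩ : ∃ t : Fin (m + 2), (t : ℕ) = m + 2 - d - 1 :=
        ⟨⟨m + 2 - d - 1, by omega⟩, rfl⟩
      have htsk : t.succ ≠ k := by
        simp only [ne_eq, Fin.ext_iff, Fin.val_succ]; omega
      refine ⟨u * G.σ t ((G.δ t.succ u)⁻¹ * x t.succ), fstep t u t.succ htsk hu, ?_⟩
      intro i hik hcond
      have hcond' : (i : ℕ) < (k : ℕ) ∨ m + 2 - d ≤ (i : ℕ) := by
        rcases hcond with h | h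
        · exact Or.inl h
        · exact Or.inr (by omega)
      rcases hcond' with hlt | hge
      · -- face below k
        obtain ⟨i₂, rfl⟩ : ∃ i₂ : Fin (m + 2), i = i₂.castSucc :=
          ⟨⟨(i : ℕ), by omega⟩, by apply Fin.ext; simp⟩
        simp only [Fin.coe_castSucc] at hlt
        obtain ⟨jj, hjjv⟩ : ∃ jj : Fin (m + 1), (jj : ℕ) = m + 2 - d - 2 :=
          ⟨⟨m + 2 - d - 2, by omega⟩, rfl⟩
        have ht_eq : t = jj.succ := by apply Fin.ext; simp only [Fin.val_succ]; omega
        rw [ht_eq]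
        have hle : i₂ ≤ jj.castSucc := by
          rw [Fin.le_def]; simp only [Fin.coe_castSucc]; omega
        have hle2 : i₂ ≤ jj.succ := by
          rw [Fin.le_def]; simp only [Fin.val_succ]; omega
        have hjk2 : (jj.succ).succ ≠ k := by
          simp only [ne_eq, Fin.ext_iff, Fin.val_succ]; omega
        rw [map_mul, δσ_le G hle, map_mul, map_inv,
          δδ G hle2 u, compat i₂ jj.succ hle2 hik hjk2,
          hface i₂.castSucc hik (Or.inl (by simpa using hlt)),
          inv_mul_cancel, map_one, mul_one]
      · rcases Nat.eq_or_lt_of_le hge with heq | hgt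
        · -- the new face
          have hieq : i = t.succ := by apply Fin.ext; simp only [Fin.val_succ]; omega
          rw [hieq, map_mul, δσ_succ, mul_inv_cancel_left]
        · -- previously filled face above
          obtain ⟨i₃, rfl⟩ : ∃ i₃ : Fin (m + 2), i = i₃.succ :=
            ⟨⟨(i : ℕ) - 1, by omega⟩, by apply Fin.ext; simp only [Fin.val_succ]; omega⟩
          simp only [Fin.val_succ] at hgt
          obtain ⟨jj, hjjv⟩ : ∃ jj : Fin (m + 1), (jj : ℕ) = m + 2 - d - 1 :=
            ⟨⟨m + 2 - d - 1, by omega⟩, rfl⟩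
          have ht_eq : t = jj.castSucc := by
            apply Fin.ext; simp only [Fin.coe_castSucc]; omega
          rw [ht_eq]
          have hgtj : jj.castSucc < i₃ := by
            rw [Fin.lt_def]; simp only [Fin.coe_castSucc]; omega
          obtain ⟨a', hav⟩ : ∃ a' : Fin (m + 2), (a' : ℕ) = m + 2 - d :=
            ⟨⟨m + 2 - d, by omega⟩, rfl⟩
          have hsucc_eq : (jj.castSucc).succ = a'.castSucc := by
            apply Fin.ext; simp only [Fin.val_succ, Fin.coe_castSucc]; omega
          have ha : a' ≤ i₃ := by rw [Fin.le_def]; omega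
          have hak : a'.castSucc ≠ k := by
            simp only [ne_eq, Fin.ext_iff, Fin.coe_castSucc]; omega
          rw [map_mul, δσ_gt G hgtj, map_mul, map_inv, hsucc_eq,
            ← δδ G ha u, hface i₃.succ hik (Or.inr (by simp only [Fin.val_succ]; omega)),
            ← compat a' i₃ ha hak hik, inv_mul_cancel, map_one, mul_one]
  obtain ⟨g, hg, hface⟩ := Q (m + 2 - (k : ℕ)) le_rfl
  refine ⟨g, hg, fun j hj => hface j hj ?_⟩
  have hjk : (j : ℕ) ≠ (k : ℕ) := fun h => hj (Fin.ext h)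
  have := j.isLt
  omega

/-- The lifting property follows from elementwise horn filling. -/
lemma lifting (f : G ⟶ H) (n : ℕ) (k : Fin (n + 2))
    (fill : ∀ (u : (Λ[n + 1, k] : SSet.{u}) ⟶ simplicialGroupToSSet.obj G)
      (y : H _⦋n + 1⦌),
      (∀ (j) (hj : j ≠ k), H.δ j y = f.app _ (u.app _ (horn.face k j hj))) →
      ∃ g : G _⦋n + 1⦌, f.app _ g = y ∧
        ∀ (j) (hj : j ≠ k), G.δ j g = u.app _ (horn.face k j hj)) :
    HasLiftingProperty ((horn (n + 1) k).ι) (simplicialGroupToSSet.map f) := by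
  constructor
  intro u v sq
  have hy : ∀ (j) (hj : j ≠ k),
      H.δ j (SSet.yonedaEquiv (X := simplicialGroupToSSet.obj H) (n := ⦋n + 1⦌) v)
        = f.app _ (u.app _ (horn.face k j hj)) := by
    intro j hj
    have h1 := types_congr_hom (NatTrans.congr_app sq.w (op (⦋n⦌ : SimplexCategory)))
      (horn.face k j hj)
    have eL : (u ≫ simplicialGroupToSSet.map f).app (op (⦋n⦌ : SimplexCategory))
        (horn.face k j hj) = f.app _ (u.app _ (horn.face k j hj)) := rfl
    have eR : ((horn (n + 1) k).ι ≫ v).app (op (⦋n⦌ : SimplexCategory))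
        (horn.face k j hj)
        = v.app (op (⦋n⦌ : SimplexCategory))
            ((stdSimplex.objEquiv (n := ⦋n + 1⦌) (m := op ⦋n⦌)).symm (SimplexCategory.δ j)) := rfl
    rw [eL, eR, app_symm] at h1
    have e4 : H.δ j (SSet.yonedaEquiv (X := simplicialGroupToSSet.obj H) (n := ⦋n + 1⦌) v)
        = (simplicialGroupToSSet.obj H).map (SimplexCategory.δ j).op
            (SSet.yonedaEquiv (X := simplicialGroupToSSet.obj H) (n := ⦋n + 1⦌) v) := rfl
    rw [e4]
    exact h1.symm
  obtain ⟨g, hg, hface⟩ := fill u (SSet.yonedaEquiv v) hy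
  constructor
  constructor
  refine { l := (SSet.yonedaEquiv (X := simplicialGroupToSSet.obj G) (n := ⦋n + 1⦌)).symm g,
           fac_left := ?_, fac_right := ?_ }
  · apply horn.hom_ext
    intro j hj
    rw [← hface j hj]
    rfl
  · apply (SSet.yonedaEquiv (X := simplicialGroupToSSet.obj H) (n := ⦋n + 1⦌)).injective
    have h3 : SSet.yonedaEquiv (X := simplicialGroupToSSet.obj H) (n := ⦋n + 1⦌)
        ((SSet.yonedaEquiv (X := simplicialGroupToSSet.obj G) (n := ⦋n + 1⦌)).symm g
          ≫ simplicialGroupToSSet.map f)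
        = f.app (op (⦋n + 1⦌ : SimplexCategory))
            (SSet.yonedaEquiv (X := simplicialGroupToSSet.obj G) (n := ⦋n + 1⦌)
              ((SSet.yonedaEquiv (X := simplicialGroupToSSet.obj G) (n := ⦋n + 1⦌)).symm g)) := rfl
    rw [h3]
    have e := Equiv.apply_symm_apply (SSet.yonedaEquiv (X := simplicialGroupToSSet.obj G) (n := ⦋n + 1⦌)) g
    exact (congrArg (fun z => f.app (op (⦋n + 1⦌ : SimplexCategory)) z) e).trans hg

end MooreAux

set_option maxHeartbeats 1000000 in
/-- A degreewise surjective morphism of simplicial groups is a Kan fibration on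
underlying simplicial sets. -/
theorem simplicial_group_surjective_is_kan_fibration
    (G H : CategoryTheory.SimplicialObject GrpCat.{u}) (f : G ⟶ H)
    (hsurj : ∀ s : SimplexCategoryᵒᵖ, Function.Surjective (f.app s)) :
    ∀ (n : ℕ) (k : Fin (n + 2)),
      HasLiftingProperty ((horn (n + 1) k).ι) (simplicialGroupToSSet.map f) := by
  intro n k
  apply MooreAux.lifting f n k
  intro u y hy
  classical
  obtain ⟨x, hx'⟩ : ∃ x : Fin (n + 2) → (G _⦋n⦌ : Type u),
      ∀ (j) (hj : j ≠ k), x j = u.app _ (horn.face k j hj) :=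
    ⟨fun j => if h : j ≠ k then u.app _ (horn.face k j h) else 1, fun j hj => dif_pos hj⟩
  cases n with
  | zero =>
    obtain ⟨g, hg, hf⟩ := MooreAux.fill_zero f hsurj k x y
      (fun j hj => by rw [hx' j hj]; exact hy j hj)
    exact ⟨g, hg, fun j hj => by rw [← hx' j hj]; exact hf j hj⟩
  | succ m =>
    have compat : ∀ (i j : Fin (m + 2)), i ≤ j → i.castSucc ≠ k → j.succ ≠ k →
        G.δ i (x j.succ) = G.δ j (x i.castSucc) := by
      intro i j hij hi hj
      have hface_rel : (Λ[m + 2, k] : SSet.{u}).map (SimplexCategory.δ i).op (horn.face k j.succ hj)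
          = (Λ[m + 2, k] : SSet.{u}).map (SimplexCategory.δ j).op (horn.face k i.castSucc hi) := by
        apply Subtype.ext
        show Δ[m + 2].map (SimplexCategory.δ i).op (horn.face k j.succ hj).1
          = Δ[m + 2].map (SimplexCategory.δ j).op (horn.face k i.castSucc hi).1
        rw [stdSimplex.map_apply, stdSimplex.map_apply]
        congr 1
        simp only [horn.face, Equiv.apply_symm_apply, unop_op, Quiver.Hom.unop_op]
        exact SimplexCategory.δ_comp_δ hij
      have n1 := types_congr_hom (u.naturality (SimplexCategory.δ i).op) (horn.face k j.succ hj)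
      have n2 := types_congr_hom (u.naturality (SimplexCategory.δ j).op) (horn.face k i.castSucc hi)
      simp only [types_comp_apply] at n1 n2
      have e1 : G.δ i (x j.succ) = (simplicialGroupToSSet.obj G).map (SimplexCategory.δ i).op
          (u.app _ (horn.face k j.succ hj)) := by rw [hx' _ hj]; rfl
      have e2 : G.δ j (x i.castSucc) = (simplicialGroupToSSet.obj G).map (SimplexCategory.δ j).op
          (u.app _ (horn.face k i.castSucc hi)) := by rw [hx' _ hi]; rfl
      rw [e1, e2, ← n1, ← n2, hface_rel]
    obtain ⟨g, hg, hf⟩ := MooreAux.fill_succ f hsurj m k x compat y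
      (fun j hj => by rw [hx' j hj]; exact hy j hj)
    exact ⟨g, hg, fun j hj => by rw [← hx' j hj]; exact hf j hj⟩
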